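/- Let X and Y be independent random variables taking at most countably many values, and let Y' be a conditionally independent copy of Y over X. Let F(X,Y) be an absolutely integrable random variable. Suppose that E[F(X,Y)] = α + O(εα) and E[F(X,Y)F(X,Y')] = α² + O(εα²) for some α, ε > 0 with ε = O(1). Then for any θ > 0, one has E[F(X,Y) | X] = α + O_≤(θ) with probability 1 - O(εα²/θ²). -/

import Mathlib

open MeasureTheory
open scoped ENNReal NNReal

lemma aux_int {Ω κ : Type} [MeasurableSpace Ω] (μ : Measure Ω) [IsFiniteMeasure μ]
    [Countable κ] (Z : Ω → κ) (hZ : ∀ y, MeasurableSet {ω | Z ω = y}) (f : κ → ℝ)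
    (hf : Integrable (fun ω => f (Z ω)) μ) :
    Summable (fun y => (μ {ω | Z ω = y}).toReal * f y) ∧
    Summable (fun y => (μ {ω | Z ω = y}).toReal * |f y|) ∧
    (∫ ω, f (Z ω) ∂μ) = ∑' y, (μ {ω | Z ω = y}).toReal * f y := by
  letI : MeasurableSpace κ := ⊤
  haveI : MeasurableSingletonClass κ := ⟨fun _ => trivial⟩
  have hmZ : Measurable Z := measurable_to_countable' (fun y => hZ y)
  have hmap : ∀ y, (Measure.map Z μ) {y} = μ {ω | Z ω = y} := fun y => by
    rw [Measure.map_apply hmZ (MeasurableSet.singleton y)]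
    congr 1
  have hfsm : StronglyMeasurable f := (measurable_from_top (f := f)).stronglyMeasurable
  have hfm : Integrable f (Measure.map Z μ) := by
    rw [integrable_map_measure hfsm.aestronglyMeasurable hmZ.aemeasurable]
    exact hf
  haveI : IsFiniteMeasure (Measure.map Z μ) := by
    constructor
    rw [Measure.map_apply hmZ MeasurableSet.univ]
    exact measure_lt_top μ _
  have habs : Summable (fun y => (μ {ω | Z ω = y}).toReal * |f y|) := by
    have hfin : (∑' y, (‖f y‖₊ : ℝ≥0∞) * (Measure.map Z μ) {y}) ≠ ⊤ := by
      rw [← lintegral_countable' (fun y => (‖f y‖₊ : ℝ≥0∞))]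
      exact hfm.2.ne
    have := ENNReal.summable_toReal hfin
    apply this.congr
    intro y
    rw [ENNReal.toReal_mul, hmap y]
    simp [Real.norm_eq_abs, mul_comm]
  have hsum : Summable (fun y => (μ {ω | Z ω = y}).toReal * f y) := by
    apply Summable.of_norm
    apply habs.congr
    intro y
    rw [Real.norm_eq_abs, abs_mul, abs_of_nonneg ENNReal.toReal_nonneg]
  refine ⟨hsum, habs, ?_⟩
  rw [← integral_map hmZ.aemeasurable hfsm.aestronglyMeasurable,
    integral_countable' hfm]
  congr 1 with y
  rw [measureReal_def, hmap y]
  simp [mul_comm]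

theorem stmt_0 (Cin : ℝ) (hCin : 0 < Cin) :
    ∃ Cout : ℝ, 0 < Cout ∧
    ∀ (Ω ι κ : Type) [MeasurableSpace Ω] (μ : Measure Ω) [IsProbabilityMeasure μ]
      [Countable ι] [Countable κ]
      (X : Ω → ι) (Y Y' : Ω → κ),
      (∀ x : ι, MeasurableSet {ω | X ω = x}) →
      (∀ y : κ, MeasurableSet {ω | Y ω = y}) →
      (∀ y : κ, MeasurableSet {ω | Y' ω = y}) →
      -- `X` and `Y` are independent
      (∀ (x : ι) (y : κ),
        μ {ω | X ω = x ∧ Y ω = y} = μ {ω | X ω = x} * μ {ω | Y ω = y}) →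
      -- `Y'` has the same conditional distribution over `X` as `Y`
      (∀ (x : ι) (y : κ),
        μ {ω | X ω = x ∧ Y' ω = y} = μ {ω | X ω = x ∧ Y ω = y}) →
      -- `Y` and `Y'` are conditionally independent over `X`
      (∀ (x : ι) (y y' : κ),
        μ {ω | X ω = x} * μ {ω | X ω = x ∧ Y ω = y ∧ Y' ω = y'} =
          μ {ω | X ω = x ∧ Y ω = y} * μ {ω | X ω = x ∧ Y' ω = y'}) →
      ∀ (F : ι → κ → ℝ),
      Integrable (fun ω => F (X ω) (Y ω)) μ →
      Integrable (fun ω => F (X ω) (Y ω) * F (X ω) (Y' ω)) μ →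
      ∀ (α ε : ℝ), 0 < α → 0 < ε → ε ≤ Cin →
      |(∫ ω, F (X ω) (Y ω) ∂μ) - α| ≤ Cin * ε * α →
      |(∫ ω, F (X ω) (Y ω) * F (X ω) (Y' ω) ∂μ) - α ^ 2| ≤ Cin * ε * α ^ 2 →
      ∀ θ : ℝ, 0 < θ →
      ∀ g : ι → ℝ,
      (∀ x : ι, g x = (∫ ω in {ω | X ω = x}, F (X ω) (Y ω) ∂μ) /
        (μ {ω | X ω = x}).toReal) →
      ENNReal.ofReal (1 - Cout * ε * α ^ 2 / θ ^ 2) ≤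
        μ {ω | |g (X ω) - α| ≤ θ} := by
  refine ⟨3 * Cin, by positivity, ?_⟩
  intro Ω ι κ _ μ _ _ _ X Y Y' hX hY hY' hind hdist hcond F hF1 hF2 α ε hα hε hεC h1 h2 θ hθ g hg
  classical
  set I1 : ℝ := ∫ ω, F (X ω) (Y ω) ∂μ with hI1
  set I2 : ℝ := ∫ ω, F (X ω) (Y ω) * F (X ω) (Y' ω) ∂μ with hI2
  set A : ι → Set Ω := fun x => {ω | X ω = x} with hA
  have hAm : ∀ x, MeasurableSet (A x) := hX
  have hAdisj : Pairwise (Function.onFun Disjoint A) := by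
    intro a b hab
    simp only [Function.onFun, Set.disjoint_left]
    rintro ω (h1 : X ω = a) (h2 : X ω = b)
    exact hab (h1 ▸ h2)
  have hAunion : (⋃ x, A x) = Set.univ := by
    ext ω; simp [hA]
  set p : ι → ℝ := fun x => (μ (A x)).toReal with hp
  have hpnn : ∀ x, 0 ≤ p x := fun x => ENNReal.toReal_nonneg
  set T : ι → ℝ := fun x => ∫ ω in A x, F (X ω) (Y ω) ∂μ with hT
  set T2 : ι → ℝ := fun x => ∫ ω in A x, F (X ω) (Y ω) * F (X ω) (Y' ω) ∂μ with hT2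
  have hS1 : HasSum T I1 := by
    have := hasSum_integral_iUnion hAm hAdisj
      (by rw [hAunion]; exact hF1.integrableOn)
    rwa [hAunion, Measure.restrict_univ] at this
  have hS2 : HasSum T2 I2 := by
    have := hasSum_integral_iUnion hAm hAdisj
      (by rw [hAunion]; exact hF2.integrableOn)
    rwa [hAunion, Measure.restrict_univ] at this
  -- the key per-fiber computation
  have key : ∀ x, T x = g x * p x ∧ T2 x = g x ^ 2 * p x := by
    intro x
    by_cases hpx : μ (A x) = 0
    · have hres : μ.restrict (A x) = 0 := Measure.restrict_eq_zero.2 hpx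
      have hT0 : T x = 0 := by
        show (∫ ω in A x, F (X ω) (Y ω) ∂μ) = 0
        simp [hres]
      have hT20 : T2 x = 0 := by
        show (∫ ω in A x, F (X ω) (Y ω) * F (X ω) (Y' ω) ∂μ) = 0
        simp [hres]
      have hp0 : p x = 0 := by
        show (μ (A x)).toReal = 0
        simp [hpx]
      have hg0 : g x = 0 := by
        rw [hg x]
        have : (∫ ω in {ω | X ω = x}, F (X ω) (Y ω) ∂μ) = T x := rfl
        rw [this, hT0]
        simp
      refine ⟨?_, ?_⟩ <;> simp [hT0, hT20, hp0]
    · have hpR : 0 < p x := ENNReal.toReal_pos hpx (measure_ne_top μ _)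
      have hInt1 : Integrable (fun ω => F x (Y ω)) (μ.restrict (A x)) := by
        apply (hF1.restrict (s := A x)).congr
        filter_upwards [ae_restrict_mem (hAm x)] with ω hω
        rw [show X ω = x from hω]
      have hInt2 : Integrable (fun ω => F x (Y ω) * F x (Y' ω)) (μ.restrict (A x)) := by
        apply (hF2.restrict (s := A x)).congr
        filter_upwards [ae_restrict_mem (hAm x)] with ω hω
        rw [show X ω = x from hω]
      have hZm : ∀ z : κ × κ, MeasurableSet {ω | (fun ω => (Y ω, Y' ω)) ω = z} := by
        intro z
        have : {ω | (fun ω => (Y ω, Y' ω)) ω = z} = {ω | Y ω = z.1} ∩ {ω | Y' ω = z.2} := by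
          ext ω; simp [Prod.ext_iff]
        rw [this]; exact (hY z.1).inter (hY' z.2)
      have e1 := aux_int (μ.restrict (A x)) Y hY (fun y => F x y) hInt1
      have e1abs := aux_int (μ.restrict (A x)) Y hY (fun y => |F x y|) hInt1.abs
      have e2 := aux_int (μ.restrict (A x)) (fun ω => (Y ω, Y' ω)) hZm
        (fun z => F x z.1 * F x z.2) hInt2
      have hq : ∀ y, (μ.restrict (A x)) {ω | Y ω = y} = μ {ω | X ω = x ∧ Y ω = y} := by
        intro y
        rw [Measure.restrict_apply (hY y)]
        congr 1
        ext ω; simp [hA]; tauto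
      have hs : ∀ z : κ × κ, (μ.restrict (A x)) {ω | (fun ω => (Y ω, Y' ω)) ω = z}
          = μ {ω | X ω = x ∧ Y ω = z.1 ∧ Y' ω = z.2} := by
        intro z
        rw [Measure.restrict_apply (hZm z)]
        congr 1
        ext ω; simp [hA, Prod.ext_iff]; tauto
      -- value of T x
      have hTx : T x = ∑' y, (μ {ω | X ω = x ∧ Y ω = y}).toReal * F x y := by
        show (∫ ω in A x, F (X ω) (Y ω) ∂μ) = _
        have hcg : ∫ ω in A x, F (X ω) (Y ω) ∂μ = ∫ ω, F x (Y ω) ∂(μ.restrict (A x)) := by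
          apply integral_congr_ae
          filter_upwards [ae_restrict_mem (hAm x)] with ω hω
          rw [show X ω = x from hω]
        rw [hcg, e1.2.2]
        exact tsum_congr fun y => by rw [hq y]
      set a : κ → ℝ := fun y => (μ {ω | X ω = x ∧ Y ω = y}).toReal * F x y with ha
      have hanorm : Summable fun y => ‖a y‖ := by
        apply (e1abs.2.1.congr ?_)
        intro y
        rw [ha]
        simp only [Real.norm_eq_abs, abs_mul, abs_of_nonneg ENNReal.toReal_nonneg, hq y]
        rw [abs_abs]
      -- conditional independence formula for the pair measure
      have hsval : ∀ z : κ × κ, (μ {ω | X ω = x ∧ Y ω = z.1 ∧ Y' ω = z.2}).toReal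
          = (μ {ω | X ω = x ∧ Y ω = z.1}).toReal * (μ {ω | X ω = x ∧ Y ω = z.2}).toReal / p x := by
        intro z
        have h := congrArg ENNReal.toReal (hcond x z.1 z.2)
        rw [ENNReal.toReal_mul, ENNReal.toReal_mul, hdist x z.2] at h
        have : p x * (μ {ω | X ω = x ∧ Y ω = z.1 ∧ Y' ω = z.2}).toReal
            = (μ {ω | X ω = x ∧ Y ω = z.1}).toReal * (μ {ω | X ω = x ∧ Y ω = z.2}).toReal := h
        field_simp
        linarith [this]
      -- value of T2 x
      have hT2x : T2 x = (∑' y, a y) * (∑' y, a y) / p x := by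
        show (∫ ω in A x, F (X ω) (Y ω) * F (X ω) (Y' ω) ∂μ) = _
        have hcg : ∫ ω in A x, F (X ω) (Y ω) * F (X ω) (Y' ω) ∂μ
            = ∫ ω, (fun z : κ × κ => F x z.1 * F x z.2) ((fun ω => (Y ω, Y' ω)) ω)
              ∂(μ.restrict (A x)) := by
          apply integral_congr_ae
          filter_upwards [ae_restrict_mem (hAm x)] with ω hω
          rw [show X ω = x from hω]
        rw [hcg, e2.2.2]
        have step : ∀ z : κ × κ,
            ((μ.restrict (A x)) {ω | (fun ω => (Y ω, Y' ω)) ω = z}).toReal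
              * (F x z.1 * F x z.2)
            = (a z.1 * a z.2) / p x := by
          intro z
          rw [hs z, hsval z, ha]
          field_simp
        rw [tsum_congr step, tsum_div_const, ← tsum_mul_tsum_of_summable_norm hanorm hanorm]
      have hgx : g x = (∑' y, a y) / p x := by
        rw [hg x, ← hTx]
      constructor
      · rw [hTx, hgx]
        field_simp
      · rw [hT2x, hgx]
        field_simp
  have hgp : HasSum (fun x => g x * p x) I1 :=
    (funext fun x => (key x).1) ▸ hS1
  have hg2p : HasSum (fun x => g x ^ 2 * p x) I2 :=
    (funext fun x => (key x).2) ▸ hS2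
  have hpsum : HasSum p 1 := by
    have hμ : (∑' x, μ (A x)) = 1 := by
      rw [← measure_iUnion hAdisj hAm, hAunion, measure_univ]
    have h := ENNReal.hasSum_toReal (f := fun x => μ (A x)) (by rw [hμ]; exact ENNReal.one_ne_top)
    have h2 : (∑' x, (μ (A x)).toReal) = 1 := by
      rw [← ENNReal.tsum_toReal_eq (fun x => measure_ne_top μ _), hμ]
      simp
    rw [h2] at h
    exact h
  set V : ℝ := I2 - 2*α*I1 + α^2 * 1 with hV
  have hVar : HasSum (fun x => (g x - α)^2 * p x) V := by
    have h := (hg2p.sub (hgp.mul_left (2*α))).add (hpsum.mul_left (α^2))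
    have e : (fun x => (g x - α)^2 * p x)
        = fun x => (g x ^ 2 * p x - 2*α*(g x * p x)) + α^2 * p x := by
      funext x; ring
    rw [e]
    exact h
  have hVnn : 0 ≤ V := by
    rw [← hVar.tsum_eq]
    exact tsum_nonneg fun x => mul_nonneg (sq_nonneg _) (hpnn x)
  have hVle : V ≤ 3 * Cin * ε * α^2 := by
    rcases abs_le.1 h1 with ⟨h1a, h1b⟩
    rcases abs_le.1 h2 with ⟨h2a, h2b⟩
    rw [hV]
    nlinarith [hα, hε, hCin]
  set B : Set ι := {x | θ < |g x - α|} with hB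
  have hBc : B.Countable := B.to_countable
  have hEset : {ω | θ < |g (X ω) - α|} = ⋃ x ∈ B, A x := by
    ext ω
    simp only [Set.mem_setOf_eq, Set.mem_iUnion]
    constructor
    · intro h
      exact ⟨X ω, h, rfl⟩
    · rintro ⟨x, hx, (he : X ω = x)⟩
      rw [he]
      exact hx
  have hEm : MeasurableSet {ω | θ < |g (X ω) - α|} := by
    rw [hEset]
    exact MeasurableSet.biUnion hBc (fun x _ => hAm x)
  have hμE : (μ {ω | θ < |g (X ω) - α|}).toReal = ∑' x : B, p x := by
    rw [hEset, measure_biUnion hBc (fun a _ b _ hab => hAdisj hab) (fun x _ => hAm x),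
      ENNReal.tsum_toReal_eq (fun x => measure_ne_top μ _)]
  have hsubV : Summable (fun x : B => (g (x:ι) - α)^2 * p x) :=
    (hVar.summable).subtype B
  have hsub0 : Summable (fun x : B => θ^2 * p x) :=
    ((hpsum.summable).mul_left (θ^2)).subtype B
  have hle1 : (∑' x : B, θ^2 * p x) ≤ ∑' x : B, (g (x:ι) - α)^2 * p x := by
    apply Summable.tsum_le_tsum _ hsub0 hsubV
    intro x
    apply mul_le_mul_of_nonneg_right _ (hpnn x)
    have hx : θ < |g (x:ι) - α| := x.2
    nlinarith [abs_nonneg (g (x:ι) - α), sq_abs (g (x:ι) - α), hθ]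
  have hle2 : (∑' x : B, (g (x:ι) - α)^2 * p x) ≤ V := by
    rw [← hVar.tsum_eq]
    exact Summable.tsum_le_tsum_of_inj (Subtype.val)
      Subtype.val_injective
      (fun c _ => mul_nonneg (sq_nonneg _) (hpnn c))
      (fun x => le_rfl) hsubV hVar.summable
  have hfrac : (μ {ω | θ < |g (X ω) - α|}).toReal ≤ 3 * Cin * ε * α^2 / θ^2 := by
    rw [hμE, le_div_iff₀ (by positivity : (0:ℝ) < θ^2)]
    have hts : (∑' x : B, p x) * θ^2 = ∑' x : B, θ^2 * p x := by
      rw [mul_comm, ← tsum_mul_left]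
    rw [hts]
    linarith
  have hgood : {ω | |g (X ω) - α| ≤ θ} = {ω | θ < |g (X ω) - α|}ᶜ := by
    ext ω; simp [not_lt]
  rw [hgood, prob_compl_eq_one_sub hEm]
  have hc : (0:ℝ) ≤ 3 * Cin * ε * α^2 / θ^2 := by positivity
  have hμEle : μ {ω | θ < |g (X ω) - α|} ≤ ENNReal.ofReal (3 * Cin * ε * α^2 / θ^2) := by
    rw [← ENNReal.ofReal_toReal (measure_ne_top μ {ω | θ < |g (X ω) - α|})]
    exact ENNReal.ofReal_le_ofReal hfrac
  calc ENNReal.ofReal (1 - 3 * Cin * ε * α^2 / θ^2)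
      = 1 - ENNReal.ofReal (3 * Cin * ε * α^2 / θ^2) := by
        rw [ENNReal.ofReal_sub _ hc, ENNReal.ofReal_one]
    _ ≤ 1 - μ {ω | θ < |g (X ω) - α|} := tsub_le_tsub_left hμEle 1
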